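/- For all complex ξ₁, ξ₂, p, q, η with Re(ξ₁) > 0, Re(ξ₂) > 0, Re(p) > 0, Re(q) > 0 and Re(η) > -1, the extended beta function admits the trigonometric integral representation B_η^{p,q}(ξ₁,ξ₂) = 2 ∫₀^{π/2} (cos t)^{2ξ₁-1} (sin t)^{2ξ₂-1} S_η(-p sec²t) S_η(-q csc²t) dt. -/

import Mathlib

open MeasureTheory Complex

/-- The Bessel–Struve kernel function, defined by its power series. -/
noncomputable def besselStruve (η t : ℂ) : ℂ :=
  (Complex.Gamma (η + 1) / (Real.sqrt Real.pi : ℂ)) *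
    ∑' m : ℕ, t ^ m * Complex.Gamma (((m : ℂ) + 1) / 2) /
      ((m.factorial : ℂ) * Complex.Gamma ((m : ℂ) / 2 + η + 1))

/-- The extended beta function `B_η^{p,q}(ξ₁, ξ₂)`. -/
noncomputable def extBeta (η p q ξ₁ ξ₂ : ℂ) : ℂ :=
  ∫ y in (0:ℝ)..1, (y : ℂ) ^ (ξ₁ - 1) * ((1 : ℂ) - (y : ℂ)) ^ (ξ₂ - 1) *
    besselStruve η (-p / (y : ℂ)) * besselStruve η (-q / (1 - (y : ℂ)))

/-- The Pochhammer symbol `(a)_l = Γ(a + l)/Γ(a)`. -/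
noncomputable def poch (a : ℂ) (l : ℕ) : ℂ := Complex.Gamma (a + l) / Complex.Gamma a

/-- The extended Gauss hypergeometric function `F_η^{p,q}(ξ₁, ξ₂; ξ₃; x)`. -/
noncomputable def extF (η p q ξ₁ ξ₂ ξ₃ x : ℂ) : ℂ :=
  ∑' l : ℕ, poch ξ₁ l * extBeta η p q (ξ₂ + l) (ξ₃ - ξ₂) * x ^ l /
    (Complex.betaIntegral ξ₂ (ξ₃ - ξ₂) * (l.factorial : ℂ))

/-- The extended confluent hypergeometric function `Φ_η^{p,q}(ξ₂; ξ₃; x)`. -/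
noncomputable def extPhi (η p q ξ₂ ξ₃ x : ℂ) : ℂ :=
  ∑' l : ℕ, extBeta η p q (ξ₂ + l) (ξ₃ - ξ₂) * x ^ l /
    (Complex.betaIntegral ξ₂ (ξ₃ - ξ₂) * (l.factorial : ℂ))

open Set in
theorem extBeta_trig_repr (ξ₁ ξ₂ p q η : ℂ)
    (h1 : 0 < ξ₁.re) (h2 : 0 < ξ₂.re) (hp : 0 < p.re) (hq : 0 < q.re) (hη : -1 < η.re) :
    extBeta η p q ξ₁ ξ₂ =
      2 * ∫ t in (0:ℝ)..(Real.pi / 2),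
        (Real.cos t : ℂ) ^ (2 * ξ₁ - 1) * (Real.sin t : ℂ) ^ (2 * ξ₂ - 1) *
          besselStruve η (-p / (Real.cos t : ℂ) ^ 2) *
          besselStruve η (-q / (Real.sin t : ℂ) ^ 2) := by
  have pi2 : (0:ℝ) < Real.pi / 2 := by positivity
  set g : ℝ → ℂ := fun y => (y : ℂ) ^ (ξ₁ - 1) * ((1 : ℂ) - (y : ℂ)) ^ (ξ₂ - 1) *
    besselStruve η (-p / (y : ℂ)) * besselStruve η (-q / (1 - (y : ℂ))) with hg
  have hderiv : ∀ t ∈ Ioo (0:ℝ) (Real.pi/2),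
      HasDerivWithinAt (fun t => Real.cos t ^ 2)
        (2 * Real.cos t * (-Real.sin t)) (Ioo (0:ℝ) (Real.pi/2)) t := by
    intro t _
    have h : HasDerivWithinAt (fun t => Real.cos t ^ 2) _ _ t :=
      ((Real.hasDerivAt_cos t).pow 2).hasDerivWithinAt
      (s := Ioo (0:ℝ) (Real.pi/2))
    simpa [pow_one, mul_comm, mul_assoc, mul_left_comm] using h
  have hinj : InjOn (fun t => Real.cos t ^ 2) (Ioo (0:ℝ) (Real.pi/2)) := by
    intro a ha b hb h
    have hca : 0 < Real.cos a := Real.cos_pos_of_mem_Ioo ⟨by linarith [ha.1], ha.2⟩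
    have hcb : 0 < Real.cos b := Real.cos_pos_of_mem_Ioo ⟨by linarith [hb.1], hb.2⟩
    have h' : Real.cos a ^ 2 = Real.cos b ^ 2 := h
    have hcc : Real.cos a = Real.cos b := by
      calc Real.cos a = Real.sqrt (Real.cos a ^ 2) := (Real.sqrt_sq hca.le).symm
        _ = Real.sqrt (Real.cos b ^ 2) := by rw [h']
        _ = Real.cos b := Real.sqrt_sq hcb.le
    exact Real.injOn_cos ⟨ha.1.le, by linarith [ha.2, Real.pi_pos]⟩
      ⟨hb.1.le, by linarith [hb.2, Real.pi_pos]⟩ hcc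
  have himg : (fun t => Real.cos t ^ 2) '' Ioo (0:ℝ) (Real.pi/2) = Ioo (0:ℝ) 1 := by
    ext y
    constructor
    · rintro ⟨t, ⟨ht0, ht1⟩, rfl⟩
      have hct : 0 < Real.cos t := Real.cos_pos_of_mem_Ioo ⟨by linarith, ht1⟩
      have hlt : Real.cos t < 1 := by
        have := Real.strictAntiOn_cos ⟨le_refl 0, Real.pi_pos.le⟩
          ⟨ht0.le, by linarith [Real.pi_pos]⟩ ht0
        simpa [Real.cos_zero] using this
      refine ⟨pow_pos hct 2, ?_⟩
      show Real.cos t ^ 2 < 1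
      nlinarith
    · rintro ⟨hy0, hy1⟩
      refine ⟨Real.arccos (Real.sqrt y), ⟨?_, ?_⟩, ?_⟩
      · exact Real.arccos_pos.mpr (by
          rw [show (1:ℝ) = Real.sqrt 1 by simp]
          exact Real.sqrt_lt_sqrt hy0.le hy1)
      · exact Real.arccos_lt_pi_div_two.mpr (Real.sqrt_pos.mpr hy0)
      · simp only
        rw [Real.cos_arccos (by linarith [Real.sqrt_nonneg y]) (by
          rw [show (1:ℝ) = Real.sqrt 1 by simp]
          exact Real.sqrt_le_sqrt hy1.le), Real.sq_sqrt hy0.le]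
  have key := integral_image_eq_integral_abs_deriv_smul (f' := fun t =>
      2 * Real.cos t * (-Real.sin t)) measurableSet_Ioo hderiv hinj g
  rw [himg] at key
  have hL : extBeta η p q ξ₁ ξ₂ = ∫ y in Ioo (0:ℝ) 1, g y := by
    rw [extBeta, intervalIntegral.integral_of_le zero_le_one,
      integral_Ioc_eq_integral_Ioo]
  rw [hL, key, intervalIntegral.integral_of_le pi2.le, integral_Ioc_eq_integral_Ioo,
    ← integral_const_mul]
  apply setIntegral_congr_fun measurableSet_Ioo
  intro t ht
  have hct : 0 < Real.cos t := Real.cos_pos_of_mem_Ioo ⟨by linarith [ht.1], ht.2⟩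
  have hst : 0 < Real.sin t := Real.sin_pos_of_pos_of_lt_pi ht.1 (by linarith [ht.2, Real.pi_pos])
  have habs : |2 * Real.cos t * (-Real.sin t)| = 2 * Real.cos t * Real.sin t := by
    rw [abs_of_nonpos (by nlinarith)]; ring
  have hcast : ((Real.cos t ^ 2 : ℝ) : ℂ) = (Real.cos t : ℂ) ^ 2 := by push_cast; ring
  have hsin : (1 : ℂ) - (Real.cos t : ℂ) ^ 2 = (Real.sin t : ℂ) ^ 2 := by
    have h : (Real.sin t : ℂ) ^ 2 = ((Real.sin t ^ 2 : ℝ) : ℂ) := by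
      rw [Complex.ofReal_pow]
    rw [h, Real.sin_sq, Complex.ofReal_sub, Complex.ofReal_one, Complex.ofReal_pow]
  have hargc : Complex.arg (Real.cos t : ℂ) = 0 := Complex.arg_ofReal_of_nonneg hct.le
  have hargs : Complex.arg (Real.sin t : ℂ) = 0 := Complex.arg_ofReal_of_nonneg hst.le
  have h2c : (Real.cos t : ℂ) ^ ((2:ℂ) * (ξ₁ - 1)) = ((Real.cos t : ℂ) ^ (2:ℕ)) ^ (ξ₁ - 1) := by
    have := Complex.cpow_nat_mul' (x := (Real.cos t : ℂ)) (n := 2)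
      (by rw [hargc]; simpa using Real.pi_pos) (by rw [hargc]; simpa using Real.pi_pos.le) (ξ₁ - 1)
    rwa [Nat.cast_ofNat] at this
  have h2s : (Real.sin t : ℂ) ^ ((2:ℂ) * (ξ₂ - 1)) = ((Real.sin t : ℂ) ^ (2:ℕ)) ^ (ξ₂ - 1) := by
    have := Complex.cpow_nat_mul' (x := (Real.sin t : ℂ)) (n := 2)
      (by rw [hargs]; simpa using Real.pi_pos) (by rw [hargs]; simpa using Real.pi_pos.le) (ξ₂ - 1)
    rwa [Nat.cast_ofNat] at this
  have hc2 : (Real.cos t : ℂ) ^ (2 * ξ₁ - 1) = ((Real.cos t : ℂ) ^ 2) ^ (ξ₁ - 1) * (Real.cos t : ℂ) := by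
    rw [show 2 * ξ₁ - 1 = 2 * (ξ₁ - 1) + 1 by ring,
      Complex.cpow_add _ _ (by exact_mod_cast hct.ne'), Complex.cpow_one, h2c]
  have hs2 : (Real.sin t : ℂ) ^ (2 * ξ₂ - 1) = ((Real.sin t : ℂ) ^ 2) ^ (ξ₂ - 1) * (Real.sin t : ℂ) := by
    rw [show 2 * ξ₂ - 1 = 2 * (ξ₂ - 1) + 1 by ring,
      Complex.cpow_add _ _ (by exact_mod_cast hst.ne'), Complex.cpow_one, h2s]
  simp only [hg, habs, hcast, hsin, hc2, hs2, Complex.real_smul, Complex.ofReal_mul,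
    Complex.ofReal_ofNat]
  ring
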